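/- Let μ be a probability measure on ℝ with distribution function F and inverse distribution function G, and let p ∈ (0,1). Define F₁⁺(x) = (1/(1−p))·min{ F(x), 1−p } and F₂⁺(x) = (1/p)·max{ F(x) + p − 1, 0 }. Then β⁺(p,μ) := inf_{t∈(0,1)} ( G(1−p+pt) − G((1−p)t) ) = sup{ b ∈ ℝ : F₁⁺(x) ≥ F₂⁺(x+b) for all x ∈ ℝ }. -/

import Mathlib

open MeasureTheory Set ProbabilityTheory Filter Topology

/-- The inverse distribution function `G(t) = inf {u : μ((-∞,u]) ≥ t}`. -/
noncomputable def invCDF (μ : Measure ℝ) (t : ℝ) : ℝ :=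
  sInf {u : ℝ | t ≤ (μ (Iic u)).toReal}

/-- `β⁺(p,μ) = inf_{t ∈ (0,1)} (G(1-p+pt) - G((1-p)t))`. -/
noncomputable def betaPlus (μ : Measure ℝ) (p : ℝ) : ℝ :=
  ⨅ t : Ioo (0:ℝ) 1, (invCDF μ (1 - p + p * t.1) - invCDF μ ((1 - p) * t.1))

theorem cdf_eq_toReal' (μ : Measure ℝ) [IsProbabilityMeasure μ] (x : ℝ) :
    cdf μ x = (μ (Iic x)).toReal := by
  rw [cdf_eq_real, measureReal_def]

section Aux

variable (μ : Measure ℝ) [IsProbabilityMeasure μ]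

lemma invCDF_eq_sInf_cdf (t : ℝ) : invCDF μ t = sInf {u : ℝ | t ≤ cdf μ u} := by
  simp only [invCDF, cdf_eq_toReal']

lemma invCDF_set_nonempty {t : ℝ} (ht : t < 1) : {u : ℝ | t ≤ cdf μ u}.Nonempty := by
  have h := (tendsto_cdf_atTop μ).eventually (eventually_ge_nhds ht)
  exact h.exists

lemma invCDF_set_bddBelow {t : ℝ} (ht : 0 < t) : BddBelow {u : ℝ | t ≤ cdf μ u} := by
  have h := (tendsto_cdf_atBot μ).eventually (eventually_lt_nhds ht)
  obtain ⟨y, hy⟩ := h.exists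
  refine ⟨y, fun u hu => ?_⟩
  by_contra hlt
  push_neg at hlt
  exact absurd (le_trans hu (monotone_cdf μ hlt.le)) (not_le.mpr hy)

lemma le_cdf_invCDF {t : ℝ} (ht0 : 0 < t) (ht1 : t < 1) : t ≤ cdf μ (invCDF μ t) := by
  rw [invCDF_eq_sInf_cdf]
  set a := sInf {u : ℝ | t ≤ cdf μ u} with ha
  have hne := invCDF_set_nonempty μ ht1
  have hrc : ContinuousWithinAt (cdf μ) (Ici a) a := (cdf μ).right_continuous a
  have hrc' : Tendsto (cdf μ) (𝓝[>] a) (𝓝 (cdf μ a)) :=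
    hrc.tendsto.mono_left (nhdsWithin_mono a Ioi_subset_Ici_self)
  refine ge_of_tendsto hrc' ?_
  filter_upwards [self_mem_nhdsWithin] with u hu
  obtain ⟨s, hs, hsu⟩ := exists_lt_of_csInf_lt hne hu
  exact le_trans hs (monotone_cdf μ hsu.le)

lemma invCDF_le_iff {t : ℝ} (ht0 : 0 < t) (ht1 : t < 1) (x : ℝ) :
    invCDF μ t ≤ x ↔ t ≤ cdf μ x := by
  constructor
  · intro h
    exact le_trans (le_cdf_invCDF μ ht0 ht1) (monotone_cdf μ h)
  · intro h
    rw [invCDF_eq_sInf_cdf]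
    exact csInf_le (invCDF_set_bddBelow μ ht0) h

lemma lt_invCDF_iff {t : ℝ} (ht0 : 0 < t) (ht1 : t < 1) (x : ℝ) :
    x < invCDF μ t ↔ cdf μ x < t := by
  rw [← not_le, ← not_le, invCDF_le_iff μ ht0 ht1]

lemma invCDF_mono {s t : ℝ} (hs : 0 < s) (hst : s ≤ t) (ht : t < 1) :
    invCDF μ s ≤ invCDF μ t := by
  rw [invCDF_le_iff μ hs (lt_of_le_of_lt hst ht)]
  exact le_trans hst (le_cdf_invCDF μ (lt_of_lt_of_le hs hst) ht)

end Aux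

/-- With `F₁⁺(x) = (1/(1-p)) min(F(x), 1-p)` and `F₂⁺(x) = (1/p) max(F(x)+p-1, 0)`,
one has `β⁺(p,μ) = sup {b : F₁⁺(x) ≥ F₂⁺(x+b) for all x}`. -/
theorem betaPlus_eq_sSup (μ : Measure ℝ) [IsProbabilityMeasure μ]
    (p : ℝ) (hp : p ∈ Ioo (0:ℝ) 1) :
    betaPlus μ p =
      sSup {b : ℝ | ∀ x : ℝ,
        (1 / p) * max ((μ (Iic (x + b))).toReal + p - 1) 0 ≤
          (1 / (1 - p)) * min ((μ (Iic x)).toReal) (1 - p)} := by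
  obtain ⟨hp0, hp1⟩ := hp
  have hq0 : (0:ℝ) < 1 - p := by linarith
  -- basic bounds for the two arguments of invCDF
  have hc0 : ∀ t : Ioo (0:ℝ) 1, 0 < (1 - p) * t.1 := fun t => mul_pos hq0 t.2.1
  have hc1 : ∀ t : Ioo (0:ℝ) 1, (1 - p) * t.1 < 1 := fun t => by
    nlinarith [t.2.1, t.2.2]
  have ha0 : ∀ t : Ioo (0:ℝ) 1, 0 < 1 - p + p * t.1 := fun t => by
    nlinarith [t.2.1]
  have ha1 : ∀ t : Ioo (0:ℝ) 1, 1 - p + p * t.1 < 1 := fun t => by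
    nlinarith [t.2.2]
  have hca : ∀ t : Ioo (0:ℝ) 1, (1 - p) * t.1 ≤ 1 - p + p * t.1 := fun t => by
    nlinarith [t.2.1, t.2.2]
  -- each term of the infimum is nonnegative
  have hterm : ∀ t : Ioo (0:ℝ) 1,
      0 ≤ invCDF μ (1 - p + p * t.1) - invCDF μ ((1 - p) * t.1) := fun t => by
    have := invCDF_mono μ (hc0 t) (hca t) (ha1 t)
    linarith
  have hbdd : BddBelow (range fun t : Ioo (0:ℝ) 1 =>
      invCDF μ (1 - p + p * t.1) - invCDF μ ((1 - p) * t.1)) := by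
    refine ⟨0, fun y hy => ?_⟩
    obtain ⟨t, rfl⟩ := hy
    exact hterm t
  have hNE : Nonempty (Ioo (0:ℝ) 1) := ⟨⟨1/2, by norm_num, by norm_num⟩⟩
  -- rewrite the membership condition
  have hmem : ∀ b : ℝ, (∀ x : ℝ,
      (1 / p) * max ((μ (Iic (x + b))).toReal + p - 1) 0 ≤
        (1 / (1 - p)) * min ((μ (Iic x)).toReal) (1 - p)) ↔
      (∀ x : ℝ, (cdf μ (x + b) + p - 1) / p ≤ min (cdf μ x) (1 - p) / (1 - p)) := by
    intro b
    constructor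
    · intro h x
      have hx := h x
      rw [← cdf_eq_toReal', ← cdf_eq_toReal'] at hx
      have hmax : cdf μ (x + b) + p - 1 ≤ max (cdf μ (x + b) + p - 1) 0 := le_max_left _ _
      calc (cdf μ (x + b) + p - 1) / p ≤ (1/p) * max (cdf μ (x + b) + p - 1) 0 := by
            rw [div_eq_inv_mul, one_div]
            exact mul_le_mul_of_nonneg_left hmax (by positivity)
        _ ≤ (1 / (1 - p)) * min (cdf μ x) (1 - p) := hx
        _ = min (cdf μ x) (1 - p) / (1 - p) := by rw [one_div, inv_mul_eq_div]
    · intro h x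
      have hx := h x
      rw [← cdf_eq_toReal', ← cdf_eq_toReal']
      have hmin0 : 0 ≤ min (cdf μ x) (1 - p) := le_min (cdf_nonneg μ x) hq0.le
      have hmax : (1/p) * max (cdf μ (x+b) + p - 1) 0
          = max ((1/p) * (cdf μ (x+b) + p - 1)) 0 := by
        rw [mul_max_of_nonneg _ _ (by positivity : (0:ℝ) ≤ 1/p), mul_zero]
      rw [hmax]
      refine max_le ?_ (by positivity)
      calc (1/p) * (cdf μ (x + b) + p - 1) = (cdf μ (x + b) + p - 1) / p := by
              rw [one_div, inv_mul_eq_div]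
          _ ≤ min (cdf μ x) (1 - p) / (1 - p) := hx
          _ = (1 / (1 - p)) * min (cdf μ x) (1 - p) := by rw [one_div, inv_mul_eq_div]
    -- end hmem
  -- the key claim: β⁺ itself satisfies the condition
  set β := betaPlus μ p with hβ
  have hβ_le : ∀ t : Ioo (0:ℝ) 1,
      β ≤ invCDF μ (1 - p + p * t.1) - invCDF μ ((1 - p) * t.1) := fun t =>
    ciInf_le hbdd t
  have hβ_mem : ∀ x : ℝ, (cdf μ (x + β) + p - 1) / p ≤ min (cdf μ x) (1 - p) / (1 - p) := by
    intro x
    by_cases hFx : 1 - p ≤ cdf μ x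
    · -- RHS is 1, LHS ≤ 1
      have hr : min (cdf μ x) (1 - p) = 1 - p := min_eq_right hFx
      rw [hr, div_self hq0.ne', div_le_one hp0]
      have := cdf_le_one μ (x + β)
      linarith
    · push_neg at hFx
      have hr : min (cdf μ x) (1 - p) = cdf μ x := min_eq_left hFx.le
      rw [hr]
      set s := cdf μ x with hs
      have hs0 : 0 ≤ s := cdf_nonneg μ x
      set t : ℝ := s / (1 - p) with hts
      have ht0 : 0 ≤ t := by positivity
      have ht1 : t < 1 := by rw [div_lt_one hq0]; exact hFx
      rw [div_le_div_iff₀ hp0 hq0]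
      by_contra hcon
      push_neg at hcon
      -- cdf μ (x+β) > 1 - p + p * t
      have hgt : 1 - p + p * t < cdf μ (x + β) := by
        have : s * p = p * ((1 - p) * t) := by
          rw [hts]; field_simp
        nlinarith
      -- choose t' ∈ (t, 1) with 1 - p + p * t' ≤ cdf μ (x + β)
      set r : ℝ := min 1 ((cdf μ (x + β) - (1 - p)) / p) with hr'
      have htr : t < r := by
        refine lt_min ht1 ?_
        rw [lt_div_iff₀ hp0]
        linarith
      set t' : ℝ := (t + r) / 2 with ht'
      have ht'0 : 0 < t' := by
        have : 0 < t + r := by linarith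
        positivity
      have ht'r : t' < r := by
        rw [ht']; linarith
      have ht'1 : t' < 1 := lt_of_lt_of_le ht'r (min_le_left _ _)
      have ht'mem : t' ∈ Ioo (0:ℝ) 1 := ⟨ht'0, ht'1⟩
      have hkey1 : 1 - p + p * t' ≤ cdf μ (x + β) := by
        have h1 : t' ≤ (cdf μ (x + β) - (1 - p)) / p :=
          le_trans ht'r.le (min_le_right _ _)
        have := (le_div_iff₀ hp0).mp h1
        linarith
      have hkey2 : cdf μ x < (1 - p) * t' := by
        have : s < (1 - p) * t' := by
          have : s = (1 - p) * t := by rw [hts]; field_simp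
          rw [this]
          have htt' : t < t' := by rw [ht']; linarith
          exact (mul_lt_mul_iff_right₀ hq0).mpr htt'
        exact this
      -- get contradiction with hβ_le
      have h1 : invCDF μ (1 - p + p * t') ≤ x + β :=
        (invCDF_le_iff μ (by nlinarith) (by nlinarith) _).mpr hkey1
      have h2 : x < invCDF μ ((1 - p) * t') :=
        (lt_invCDF_iff μ (mul_pos hq0 ht'0) (by nlinarith) _).mpr hkey2
      have := hβ_le ⟨t', ht'mem⟩
      simp only at this
      linarith
  -- every member is ≤ β
  have hub : ∀ b : ℝ, (∀ x : ℝ,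
      (cdf μ (x + b) + p - 1) / p ≤ min (cdf μ x) (1 - p) / (1 - p)) → b ≤ β := by
    intro b hb
    refine le_ciInf fun t => ?_
    by_contra hcon
    push_neg at hcon
    -- invCDF μ (1-p+p*t) < invCDF μ ((1-p)*t) + b
    have hlt : invCDF μ (1 - p + p * t.1) - b < invCDF μ ((1 - p) * t.1) := by linarith
    obtain ⟨x, hx1, hx2⟩ := exists_between hlt
    have hF1 : cdf μ x < (1 - p) * t.1 :=
      (lt_invCDF_iff μ (hc0 t) (hc1 t) x).mp hx2
    have hF2 : 1 - p + p * t.1 ≤ cdf μ (x + b) := by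
      have : invCDF μ (1 - p + p * t.1) ≤ x + b := by linarith
      exact ((invCDF_le_iff μ (ha0 t) (ha1 t) _).mp this)
    have hbx := hb x
    have hmin : min (cdf μ x) (1 - p) ≤ cdf μ x := min_le_left _ _
    rw [div_le_div_iff₀ hp0 hq0] at hbx
    nlinarith [t.2.1, t.2.2, min_le_left (cdf μ x) (1 - p)]
  -- conclude
  apply le_antisymm
  · exact le_csSup ⟨β, fun b hb => hub b ((hmem b).mp hb)⟩ ((hmem β).mpr hβ_mem)
  · exact csSup_le ⟨β, (hmem β).mpr hβ_mem⟩ fun b hb => hub b ((hmem b).mp hb)
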